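/- If v is a polynomial of degree ≤ p+1 on ℝ³, then curl(grad v) = 0 and grad v belongs to the Nédélec space W¹_p; conversely every curl-free element of W¹_p is a gradient of a polynomial of degree ≤ p+1. -/

import Mathlib

open MeasureTheory

/-- Partial derivative of a scalar function on ℝ³. -/
noncomputable def pd3 (f : (Fin 3 → ℝ) → ℝ) (i : Fin 3) (x : Fin 3 → ℝ) : ℝ :=
  fderiv ℝ f x (Pi.single i 1)

/-- Curl of a vector field on ℝ³. -/
noncomputable def curl3 (u : (Fin 3 → ℝ) → (Fin 3 → ℝ)) (x : Fin 3 → ℝ) : Fin 3 → ℝ :=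
  ![pd3 (fun y => u y 2) 1 x - pd3 (fun y => u y 1) 2 x,
    pd3 (fun y => u y 0) 2 x - pd3 (fun y => u y 2) 0 x,
    pd3 (fun y => u y 1) 0 x - pd3 (fun y => u y 0) 1 x]

/-- Divergence of a vector field on ℝ³. -/
noncomputable def div3 (u : (Fin 3 → ℝ) → (Fin 3 → ℝ)) (x : Fin 3 → ℝ) : ℝ :=
  ∑ i, pd3 (fun y => u y i) i x

/-- Gradient of a scalar field on ℝ³. -/
noncomputable def grad3 (f : (Fin 3 → ℝ) → ℝ) (x : Fin 3 → ℝ) : Fin 3 → ℝ :=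
  fun i => pd3 f i x

/-- Cross product in ℝ³. -/
def cross3 (a b : Fin 3 → ℝ) : Fin 3 → ℝ :=
  ![a 1 * b 2 - a 2 * b 1, a 2 * b 0 - a 0 * b 2, a 0 * b 1 - a 1 * b 0]

/-- Euclidean dot product in ℝ³. -/
def dot3 (a b : Fin 3 → ℝ) : ℝ := ∑ i, a i * b i

/-- `f` is (given by) a polynomial of total degree ≤ p. -/
def IsPoly3 (p : ℕ) (f : (Fin 3 → ℝ) → ℝ) : Prop :=
  ∃ q : MvPolynomial (Fin 3) ℝ, q.totalDegree ≤ p ∧ ∀ x, f x = MvPolynomial.eval x q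

/-- Vector field whose components are polynomials of total degree ≤ p. -/
def IsPolyVec3 (p : ℕ) (u : (Fin 3 → ℝ) → (Fin 3 → ℝ)) : Prop :=
  ∀ i, IsPoly3 p (fun x => u x i)

/-- First-family Nédélec space of degree p (as a set of vector fields). -/
def NedelecW1 (p : ℕ) : Set ((Fin 3 → ℝ) → (Fin 3 → ℝ)) :=
  {v | ∃ P Q, IsPolyVec3 p P ∧ IsPolyVec3 p Q ∧ ∀ x, v x = P x + cross3 (Q x) x}

/-- Face-element (second family) space of degree p. -/
def NedelecW2 (p : ℕ) : Set ((Fin 3 → ℝ) → (Fin 3 → ℝ)) :=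
  {v | ∃ P q, IsPolyVec3 p P ∧ IsPoly3 p q ∧ ∀ x, v x = P x + q x • x}

/-- Poincaré lifting with center a. -/
noncomputable def Rlift (a : Fin 3 → ℝ) (u : (Fin 3 → ℝ) → (Fin 3 → ℝ))
    (x : Fin 3 → ℝ) : Fin 3 → ℝ :=
  cross3 (∫ t in (0:ℝ)..1, t • u (a + t • (x - a))) (x - a)

/-- Degree-2 Poincaré lifting with center a. -/
noncomputable def Dlift (a : Fin 3 → ℝ) (u : (Fin 3 → ℝ) → ℝ)
    (x : Fin 3 → ℝ) : Fin 3 → ℝ :=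
  (∫ t in (0:ℝ)..1, t ^ 2 * u (a + t • (x - a))) • (x - a)

/-! ### Auxiliary material -/

open MvPolynomial

section Aux

lemma hasFDerivAt_eval' (q : MvPolynomial (Fin 3) ℝ) (x : Fin 3 → ℝ) :
    HasFDerivAt (fun y => eval y q)
      (∑ i, (eval x (pderiv i q)) • (ContinuousLinearMap.proj i : (Fin 3 → ℝ) →L[ℝ] ℝ)) x := by
  induction q using MvPolynomial.induction_on with
  | C a =>
      simp only [eval_C, pderiv_C, map_zero, zero_smul, Finset.sum_const_zero]
      exact hasFDerivAt_const (𝕜 := ℝ) a x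
  | add f g hf hg =>
      simp only [eval_add, map_add]
      have hsum : (∑ i : Fin 3, ((eval x) ((pderiv i) f) + (eval x) ((pderiv i) g)) •
            (ContinuousLinearMap.proj i : (Fin 3 → ℝ) →L[ℝ] ℝ))
          = (∑ i : Fin 3, (eval x) ((pderiv i) f) •
              (ContinuousLinearMap.proj i : (Fin 3 → ℝ) →L[ℝ] ℝ))
            + ∑ i : Fin 3, (eval x) ((pderiv i) g) •
              (ContinuousLinearMap.proj i : (Fin 3 → ℝ) →L[ℝ] ℝ) := by
        rw [← Finset.sum_add_distrib]
        exact Finset.sum_congr rfl fun i _ => add_smul _ _ _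
      rw [hsum]
      exact hf.add hg
  | mul_X f j hf =>
      have hXj : HasFDerivAt (fun y : Fin 3 → ℝ => y j)
          (ContinuousLinearMap.proj j : (Fin 3 → ℝ) →L[ℝ] ℝ) x :=
        (ContinuousLinearMap.proj j : (Fin 3 → ℝ) →L[ℝ] ℝ).hasFDerivAt
      have := hf.mul hXj
      simp only [eval_mul, eval_X, Pi.mul_def] at this ⊢
      refine this.congr_fderiv (Eq.symm ?_)
      have : ∀ i : Fin 3, pderiv i (f * X j) = pderiv i f * X j + f * pderiv i (X j) := by
        intro i; exact pderiv_mul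
      simp only [this, eval_add, eval_mul, eval_X, add_smul]
      rw [Finset.sum_add_distrib]
      rw [add_comm]
      congr 1
      · classical
        rw [Finset.sum_eq_single j]
        · simp [pderiv_X_self]
        · intro b _ hb
          simp [pderiv_X_of_ne (Ne.symm hb)]
        · simp
      · rw [Finset.smul_sum]
        refine Finset.sum_congr rfl fun i _ => ?_
        rw [smul_smul, mul_comm]

lemma pd3_eval (q : MvPolynomial (Fin 3) ℝ) (i : Fin 3) (x : Fin 3 → ℝ) :
    pd3 (fun y => eval y q) i x = eval x (pderiv i q) := by
  rw [pd3, (hasFDerivAt_eval' q x).fderiv]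
  classical
  simp [ContinuousLinearMap.proj_apply, Pi.single_apply]

lemma coeff_pderiv' (j : Fin 3) (q : MvPolynomial (Fin 3) ℝ) (m : Fin 3 →₀ ℕ) :
    coeff m (pderiv j q) = ((m j : ℝ) + 1) * coeff (m + Finsupp.single j 1) q := by
  classical
  induction q using MvPolynomial.induction_on' with
  | add f g hf hg => simp [map_add, coeff_add, hf, hg]; ring
  | monomial s a =>
      rw [pderiv_monomial]
      by_cases hs : s j = 0
      · rw [coeff_monomial, coeff_monomial]
        have h1 : ¬ s = m + Finsupp.single j 1 := by
          intro h; apply absurd hs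
          rw [h]; simp
        rw [if_neg h1, mul_zero]
        split <;> simp [hs]
      · rw [coeff_monomial, coeff_monomial]
        have key : (s - Finsupp.single j 1 = m) ↔ (s = m + Finsupp.single j 1) := by
          constructor
          · intro h
            rw [← h]
            ext k
            by_cases hk : k = j
            · subst hk; simp [Nat.sub_add_cancel (Nat.one_le_iff_ne_zero.mpr hs)]
            · simp [Finsupp.single_apply, Ne.symm hk, hk]
          · intro h; rw [h]; ext k
            by_cases hk : k = j
            · subst hk; simp
            · simp [Finsupp.single_apply, Ne.symm hk, hk]
        by_cases hsm : s = m + Finsupp.single j 1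
        · rw [if_pos (key.mpr hsm), if_pos hsm, hsm]
          simp; ring
        · rw [if_neg (fun h => hsm (key.mp h)), if_neg hsm, mul_zero]

lemma pderiv_comm' (i j : Fin 3) (q : MvPolynomial (Fin 3) ℝ) :
    pderiv i (pderiv j q) = pderiv j (pderiv i q) := by
  apply MvPolynomial.ext
  intro m
  rw [coeff_pderiv', coeff_pderiv', coeff_pderiv', coeff_pderiv']
  simp only [Finsupp.add_apply, Finsupp.single_apply]
  rw [add_assoc, add_assoc, add_comm (Finsupp.single j 1) (Finsupp.single i 1)]
  by_cases h : i = j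
  · subst h; ring
  · simp [Finsupp.single_apply, h, Ne.symm h]
    ring

lemma totalDegree_pderiv_le' (j : Fin 3) (q : MvPolynomial (Fin 3) ℝ) (n : ℕ)
    (h : q.totalDegree ≤ n + 1) : (pderiv j q).totalDegree ≤ n := by
  classical
  rw [show q = ∑ m ∈ q.support, monomial m (coeff m q) from (support_sum_monomial_coeff q).symm]
  rw [map_sum]
  apply totalDegree_finsetSum_le
  intro m hm
  by_cases hmj : m j = 0
  · rw [pderiv_monomial, hmj]; simp
  · rw [pderiv_monomial]
    refine (totalDegree_monomial_le _ _).trans ?_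
    have hle : Finsupp.single j 1 ≤ m := by
      rw [Finsupp.single_le_iff]; omega
    have hsum : ((m - Finsupp.single j 1).sum fun _ e => e)
        + ((Finsupp.single j 1).sum fun _ e => e) = m.sum fun _ e => e := by
      rw [← Finsupp.sum_add_index' (fun _ => rfl) (fun _ _ _ => rfl), tsub_add_cancel_of_le hle]
    have h1 : ((Finsupp.single j 1).sum fun _ e => e) = 1 := by simp
    have hms : (m.sum fun _ e => e) ≤ n + 1 := le_trans (MvPolynomial.le_totalDegree hm) h
    simp only [Function.id_def]
    omega

/-- Inverse of the Euler operator (monomial-wise division by the total degree). -/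
noncomputable def Dinv (g : MvPolynomial (Fin 3) ℝ) : MvPolynomial (Fin 3) ℝ :=
  ∑ m ∈ g.support, monomial m (coeff m g / ((m.sum fun _ e => e : ℕ) : ℝ))

lemma coeff_Dinv (g : MvPolynomial (Fin 3) ℝ) (n : Fin 3 →₀ ℕ) :
    coeff n (Dinv g) = coeff n g / ((n.sum fun _ e => e : ℕ) : ℝ) := by
  classical
  rw [Dinv, coeff_sum]
  simp only [coeff_monomial]
  rw [Finset.sum_ite_eq' g.support n]
  split
  · rfl
  · next h =>
      rw [notMem_support_iff.mp h, zero_div]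

lemma totalDegree_Dinv_le (g : MvPolynomial (Fin 3) ℝ) :
    (Dinv g).totalDegree ≤ g.totalDegree := by
  apply totalDegree_finsetSum_le
  intro m hm
  exact (totalDegree_monomial_le _ _).trans (le_totalDegree hm)

lemma coeff_X_mul_pderiv (i : Fin 3) (q : MvPolynomial (Fin 3) ℝ) (m : Fin 3 →₀ ℕ) :
    coeff m (X i * pderiv i q) = (m i : ℝ) * coeff m q := by
  classical
  rw [coeff_X_mul']
  by_cases hmi : m i = 0
  · rw [if_neg (by simp [Finsupp.mem_support_iff, hmi]), hmi]
    simp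
  · rw [if_pos (by simp [Finsupp.mem_support_iff, hmi])]
    rw [coeff_pderiv']
    have h1 : ((m - Finsupp.single i 1 : Fin 3 →₀ ℕ)) i = m i - 1 := by
      rw [Finsupp.tsub_apply, Finsupp.single_apply, if_pos rfl]
    have h2 : m - Finsupp.single i 1 + Finsupp.single i 1 = m := by
      apply tsub_add_cancel_of_le
      rw [Finsupp.single_le_iff]; omega
    rw [h1, h2]
    have : ((m i - 1 : ℕ) : ℝ) + 1 = (m i : ℝ) := by
      have : (1:ℕ) ≤ m i := by omega
      push_cast [Nat.cast_sub this]
      ring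
    rw [this]

lemma degsum_eq (m : Fin 3 →₀ ℕ) : (m.sum fun _ e => e) = ∑ i : Fin 3, m i :=
  Finsupp.sum_fintype _ _ (fun _ => rfl)

lemma pderiv_Dinv (r : Fin 3 → MvPolynomial (Fin 3) ℝ)
    (hsym : ∀ i j, pderiv i (r j) = pderiv j (r i)) (j : Fin 3) :
    pderiv j (Dinv (∑ i, X i * r i)) = r j := by
  classical
  set g := ∑ i, X i * r i with hgdef
  have hpg : pderiv j g = r j + ∑ i, X i * pderiv i (r j) := by
    rw [hgdef, map_sum]
    have hterm : ∀ i : Fin 3, pderiv j (X i * r i)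
        = (if i = j then r i else 0) + X i * pderiv i (r j) := by
      intro i
      rw [pderiv_mul, hsym j i]
      congr 1
      by_cases h : i = j
      · subst h; rw [pderiv_X_self, if_pos rfl, one_mul]
      · rw [pderiv_X_of_ne h, if_neg h, zero_mul]
    simp only [hterm]
    rw [Finset.sum_add_distrib, Finset.sum_ite_eq' Finset.univ j]
    simp
  have hcoeffg : ∀ m : Fin 3 →₀ ℕ, coeff m (pderiv j g)
      = (((m.sum fun _ e => e : ℕ) : ℝ) + 1) * coeff m (r j) := by
    intro m
    rw [hpg, coeff_add, coeff_sum]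
    simp only [coeff_X_mul_pderiv]
    rw [← Finset.sum_mul, degsum_eq]
    push_cast
    ring
  apply MvPolynomial.ext
  intro m
  rw [coeff_pderiv', coeff_Dinv]
  have hdeg : ((m + Finsupp.single j 1).sum fun _ e => e)
      = (m.sum fun _ e => e) + 1 := by
    rw [Finsupp.sum_add_index' (fun _ => rfl) (fun _ _ _ => rfl)]
    simp
  have hkey : ((m j : ℝ) + 1) * coeff (m + Finsupp.single j 1) g
      = (((m.sum fun _ e => e : ℕ) : ℝ) + 1) * coeff m (r j) := by
    rw [← coeff_pderiv', hcoeffg]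
  have hne : (((m.sum fun _ e => e : ℕ) : ℝ) + 1) ≠ 0 := by positivity
  rw [hdeg, Nat.cast_add, Nat.cast_one, mul_div_assoc', hkey,
    mul_div_cancel_left₀ _ hne]

end Aux

set_option maxHeartbeats 1000000 in
/-- `grad(P_{p+1}(ℝ³)) = {u ∈ W¹_p : curl u = 0}`. -/
theorem grad_poly_eq_kernel_curl (p : ℕ) :
    {u | ∃ f, IsPoly3 (p + 1) f ∧ ∀ x, u x = grad3 f x} =
      {u | u ∈ NedelecW1 p ∧ ∀ x, curl3 u x = 0} := by
  ext u
  simp only [Set.mem_setOf_eq]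
  constructor
  · rintro ⟨f, ⟨q, hq, hfq⟩, hux⟩
    have hfeq : f = fun x => eval x q := funext hfq
    have hu : ∀ i : Fin 3, (fun y => u y i) = fun y => eval y (pderiv i q) := by
      intro i; funext y
      rw [hux y]
      show pd3 f i y = _
      rw [hfeq, pd3_eval]
    constructor
    · refine ⟨u, fun _ => 0, ?_, ?_, ?_⟩
      · intro i
        exact ⟨pderiv i q, totalDegree_pderiv_le' i q (p) hq,
          fun x => by rw [show (fun x => u x i) x = u x i from rfl, congrFun (hu i) x]⟩
      · intro i
        exact ⟨0, by simp, fun x => by simp⟩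
      · intro x
        funext i
        have hc : cross3 (0 : Fin 3 → ℝ) x = 0 := by
          funext k
          fin_cases k <;> simp [cross3]
        rw [hc, add_zero]
    · intro x
      funext i
      have hc : ∀ a b : Fin 3, pd3 (fun y => u y a) b x = eval x (pderiv b (pderiv a q)) := by
        intro a b
        rw [hu a, pd3_eval]
      fin_cases i
      · show pd3 (fun y => u y 2) 1 x - pd3 (fun y => u y 1) 2 x = _
        rw [hc, hc, pderiv_comm' 1 2 q, sub_self]
        rfl
      · show pd3 (fun y => u y 0) 2 x - pd3 (fun y => u y 2) 0 x = _
        rw [hc, hc, pderiv_comm' 2 0 q, sub_self]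
        rfl
      · show pd3 (fun y => u y 1) 0 x - pd3 (fun y => u y 0) 1 x = _
        rw [hc, hc, pderiv_comm' 0 1 q, sub_self]
        rfl
  · rintro ⟨⟨P, Q, hP, hQ, huPQ⟩, hcurl⟩
    choose s hsdeg hs using hP
    choose t htdeg ht using hQ
    set r : Fin 3 → MvPolynomial (Fin 3) ℝ :=
      ![s 0 + (t 1 * X 2 - t 2 * X 1),
        s 1 + (t 2 * X 0 - t 0 * X 2),
        s 2 + (t 0 * X 1 - t 1 * X 0)] with hrdef
    have heval : ∀ (x : Fin 3 → ℝ) (i : Fin 3), u x i = eval x (r i) := by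
      intro x i
      rw [huPQ x]
      fin_cases i <;>
        simp [hrdef, cross3, ← hs, ← ht, Pi.add_apply]
    have hufun : ∀ i : Fin 3, (fun y => u y i) = fun y => eval y (r i) := by
      intro i; funext y; exact heval y i
    clear_value r
    clear hrdef
    have hpair : ∀ a b : Fin 3,
        (∀ x : Fin 3 → ℝ, pd3 (fun y => u y b) a x - pd3 (fun y => u y a) b x = 0) →
        pderiv a (r b) = pderiv b (r a) := by
      intro a b h
      apply MvPolynomial.funext
      intro x
      have hx := h x
      rw [hufun b, hufun a, pd3_eval, pd3_eval] at hx
      linarith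
    have h12 : pderiv 1 (r 2) = pderiv 2 (r 1) := by
      apply hpair
      intro x
      have := congrFun (hcurl x) 0
      simpa [curl3] using this
    have h20 : pderiv 2 (r 0) = pderiv 0 (r 2) := by
      apply hpair
      intro x
      have := congrFun (hcurl x) 1
      simpa [curl3] using this
    have h01 : pderiv 0 (r 1) = pderiv 1 (r 0) := by
      apply hpair
      intro x
      have := congrFun (hcurl x) 2
      simpa [curl3] using this
    have hsym : ∀ i j, pderiv i (r j) = pderiv j (r i) := by
      intro i j
      fin_cases i <;> fin_cases j <;>
        simp only [Fin.zero_eta, Fin.mk_one, Fin.reduceFinMk] <;>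
        first
          | rfl
          | exact h01
          | exact h01.symm
          | exact h12
          | exact h12.symm
          | exact h20
          | exact h20.symm
    set g := ∑ i, X (R := ℝ) i * r i with hgdef
    have hgalt : g = ∑ i : Fin 3, X (R := ℝ) i * s i := by
      apply MvPolynomial.funext
      intro x
      rw [hgdef]
      simp only [map_sum, eval_mul, eval_X]
      rw [Fin.sum_univ_three, Fin.sum_univ_three]
      have e0 := heval x 0
      have e1 := heval x 1
      have e2 := heval x 2
      rw [← e0, ← e1, ← e2, ← hs 0 x, ← hs 1 x, ← hs 2 x]
      rw [huPQ x]
      simp [cross3, Pi.add_apply]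
      ring
    have hgdeg : g.totalDegree ≤ p + 1 := by
      rw [hgalt]
      apply totalDegree_finsetSum_le
      intro i _
      refine (totalDegree_mul _ _).trans ?_
      have : (X (R := ℝ) (σ := Fin 3) i).totalDegree = 1 := totalDegree_X i
      rw [this]
      have := hsdeg i
      omega
    refine ⟨fun x => eval x (Dinv g), ⟨Dinv g, (totalDegree_Dinv_le g).trans hgdeg,
      fun x => rfl⟩, ?_⟩
    intro x
    funext i
    show u x i = pd3 (fun y => eval y (Dinv g)) i x
    rw [pd3_eval, hgdef, pderiv_Dinv r hsym i, ← heval x i]
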